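/- Let β be a real number with 0 < β < β_h − d_f/2, and assume that ∑_{n≥0} α^{−2nβ} ∑_{k=1}^{N^{n+1}} (ξ^{(n+1)}_k)² < ∞. Then for every z ∈ Z and every n ≥ 0, |S^{(n)}(z)| ≤ |h(z, y^{(0)}_1)| · |ξ^{(0)}_1| + K_h · (∑_{m≥0} N^{m+1} α^{2m(β−β_h)})^{1/2} · (∑_{m≥0} α^{−2mβ} ∑_{k=1}^{N^{m+1}} (ξ^{(m+1)}_k)²)^{1/2}, where the first series on the right converges because 2(β_h − β) > d_f = log N / log α. -/

import Mathlib

open MeasureTheory Filter Set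

/-- Context as in Statement 0: `(X,d)` a metric space, `α > 1`, `N ≥ 2`,
`d_f = log N / log α`, nested nonempty sets `E n k` with diameter at most `α^{-n}`,
parent map `c`, refinement-additive weights `ξ n k`, points `y n k ∈ E n k`, `Z` a
topological space, `h : Z × X → ℝ` bounded, continuous in `z`, Hölder in `y` with
exponent `β_h > d_f/2`, and `S n z = ∑_k h(z, y n k) ξ n k`.

Claim: if `0 < β < β_h − d_f/2` and `∑_{n≥0} α^{−2nβ} ∑_k (ξ^{(n+1)}_k)² < ∞`, then for
every `z` and `n`,
`|S^{(n)}(z)| ≤ |h(z, y^{(0)}_1)|·|ξ^{(0)}_1|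
  + K_h (∑_{m≥0} N^{m+1} α^{2m(β−β_h)})^{1/2} (∑_{m≥0} α^{−2mβ} ∑_k (ξ^{(m+1)}_k)²)^{1/2}`,
where the first series on the right converges (since `2(β_h − β) > d_f`). -/
theorem statement1
    {X : Type*} [MetricSpace X] {Z : Type*} [TopologicalSpace Z]
    (α : ℝ) (hα : 1 < α) (N : ℕ) (hN : 2 ≤ N)
    (E : ∀ n : ℕ, Fin (N ^ n) → Set X)
    (hE_ne : ∀ n k, (E n k).Nonempty)
    (hE_diam : ∀ n k, EMetric.diam (E n k) ≤ ENNReal.ofReal ((α ^ n)⁻¹))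
    (c : ∀ n : ℕ, Fin (N ^ (n + 1)) → Fin (N ^ n))
    (hc : ∀ n k, E (n + 1) k ⊆ E n (c n k))
    (ξ : ∀ n : ℕ, Fin (N ^ n) → ℝ)
    (hξ : ∀ n k', ξ n k' = ∑ k ∈ Finset.univ.filter (fun k => c n k = k'), ξ (n + 1) k)
    (y : ∀ n : ℕ, Fin (N ^ n) → X)
    (hy : ∀ n k, y n k ∈ E n k)
    (h : Z → X → ℝ)
    (Mh : ℝ) (h_bdd : ∀ z x, |h z x| ≤ Mh)
    (h_cont : ∀ x, Continuous fun z => h z x)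
    (Kh βh : ℝ) (hKh : 0 < Kh)
    (hβh : Real.log N / Real.log α / 2 < βh)
    (h_hold : ∀ z (y₁ y₂ : X), |h z y₁ - h z y₂| ≤ Kh * dist y₁ y₂ ^ βh)
    (S : ℕ → Z → ℝ)
    (hS : ∀ n z, S n z = ∑ k, h z (y n k) * ξ n k)
    (β : ℝ) (hβ0 : 0 < β) (hβ : β < βh - Real.log N / Real.log α / 2)
    (hsum : Summable fun n : ℕ =>
      α ^ (-(2 * (n : ℝ) * β)) * ∑ k, (ξ (n + 1) k) ^ 2) :
    (Summable fun m : ℕ =>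
      (N : ℝ) ^ (m + 1) * α ^ (2 * (m : ℝ) * (β - βh))) ∧
    ∀ (z : Z) (n : ℕ),
      |S n z| ≤ |h z (y 0 ⟨0, by simp⟩)| * |ξ 0 ⟨0, by simp⟩|
        + Kh * Real.sqrt (∑' m : ℕ, (N : ℝ) ^ (m + 1) * α ^ (2 * (m : ℝ) * (β - βh)))
            * Real.sqrt (∑' m : ℕ,
                α ^ (-(2 * (m : ℝ) * β)) * ∑ k, (ξ (m + 1) k) ^ 2) := by
  have hα0 : (0:ℝ) < α := lt_trans one_pos hα
  have hN1 : (1:ℝ) < (N:ℝ) := by exact_mod_cast lt_of_lt_of_le one_lt_two hN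
  have hN0 : (0:ℝ) < (N:ℝ) := lt_trans one_pos hN1
  have hlogα : 0 < Real.log α := Real.log_pos hα
  have hlogN : 0 < Real.log N := Real.log_pos hN1
  have hβh0 : 0 < βh := lt_trans (by positivity) hβh
  set q : ℝ := (N:ℝ) * α ^ (2*(β - βh)) with hq
  have hq0 : 0 ≤ q := by positivity
  have hq1 : q < 1 := by
    have he : α ^ (2*(β - βh)) = Real.exp ((2*(β-βh)) * Real.log α) := by
      rw [Real.rpow_def_of_pos hα0, mul_comm]
    rw [hq, he]
    have h1 : (2*(β-βh)) * Real.log α < -Real.log N := by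
      have h2 : Real.log N / Real.log α < 2*(βh - β) := by
        have := hβ
        nlinarith
      have h3 : Real.log N < 2*(βh - β) * Real.log α :=
        (div_lt_iff₀ hlogα).mp h2
      nlinarith
    calc (N:ℝ) * Real.exp ((2*(β-βh)) * Real.log α)
        < (N:ℝ) * Real.exp (-Real.log N) :=
          mul_lt_mul_of_pos_left (Real.exp_lt_exp.mpr h1) hN0
      _ = 1 := by
          rw [Real.exp_neg, Real.exp_log hN0]
          field_simp
  have hterm : ∀ m : ℕ, (N : ℝ) ^ (m + 1) * α ^ (2 * (m : ℝ) * (β - βh))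
      = (N:ℝ) * q ^ m := by
    intro m
    have he : α ^ (2 * (m:ℝ) * (β - βh)) = (α ^ (2*(β - βh))) ^ m := by
      rw [show 2 * (m:ℝ) * (β - βh) = (2*(β - βh)) * (m:ℝ) by ring,
        Real.rpow_mul hα0.le, Real.rpow_natCast]
    rw [he, hq, mul_pow, pow_succ]
    ring
  have hsumA : Summable fun m : ℕ =>
      (N : ℝ) ^ (m + 1) * α ^ (2 * (m : ℝ) * (β - βh)) := by
    refine Summable.congr ((summable_geometric_of_lt_one hq0 hq1).mul_left (N:ℝ)) ?_
    intro m; rw [hterm m]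
  refine ⟨hsumA, ?_⟩
  intro z n
  -- notation
  set A : ℕ → ℝ := fun m => (N : ℝ) ^ (m + 1) * α ^ (2 * (m : ℝ) * (β - βh)) with hA
  set B : ℕ → ℝ := fun m => α ^ (-(2 * (m : ℝ) * β)) * ∑ k, (ξ (m + 1) k) ^ 2 with hB
  have hA0 : ∀ m, 0 ≤ A m := fun m => by
    simp only [hA]; positivity
  have hB0 : ∀ m, 0 ≤ B m := fun m => by
    simp only [hB]
    have : (0:ℝ) ≤ ∑ k, (ξ (m + 1) k) ^ 2 := Finset.sum_nonneg fun k _ => sq_nonneg _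
    positivity
  -- S 0
  have hS0 : |S 0 z| = |h z (y 0 ⟨0, by simp⟩)| * |ξ 0 ⟨0, by simp⟩| := by
    rw [hS, Finset.sum_eq_single (⟨0, by simp⟩ : Fin (N ^ 0))]
    · exact abs_mul _ _
    · intro b _ hb
      have hb1 : (b : ℕ) < 1 := by simpa using b.isLt
      exact absurd (Fin.ext (by omega : b.1 = 0)) hb
    · intro hb; exact absurd (Finset.mem_univ _) hb
  -- difference formula
  have hdiff : ∀ m, S (m+1) z - S m z
      = ∑ k : Fin (N^(m+1)), (h z (y (m+1) k) - h z (y m (c m k))) * ξ (m+1) k := by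
    intro m
    have hSm : S m z = ∑ k : Fin (N^(m+1)), h z (y m (c m k)) * ξ (m+1) k := by
      rw [hS]
      calc ∑ k', h z (y m k') * ξ m k'
          = ∑ k', ∑ k ∈ Finset.univ.filter (fun k => c m k = k'),
              h z (y m (c m k)) * ξ (m+1) k := by
            refine Finset.sum_congr rfl fun k' _ => ?_
            rw [hξ m k', Finset.mul_sum]
            refine Finset.sum_congr rfl fun k hk => ?_
            rw [(Finset.mem_filter.mp hk).2]
        _ = ∑ k, h z (y m (c m k)) * ξ (m+1) k :=
            Finset.sum_fiberwise Finset.univ (c m)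
              (fun k => h z (y m (c m k)) * ξ (m+1) k)
    rw [hS, hSm, ← Finset.sum_sub_distrib]
    refine Finset.sum_congr rfl fun k _ => ?_
    ring
  -- per-level bound
  have hDm : ∀ m, |S (m+1) z - S m z| ≤ Kh * (Real.sqrt (A m) * Real.sqrt (B m)) := by
    intro m
    have hdist : ∀ k : Fin (N^(m+1)),
        dist (y (m+1) k) (y m (c m k)) ≤ (α ^ m)⁻¹ := by
      intro k
      have h1 : y (m+1) k ∈ E m (c m k) := hc m k (hy (m+1) k)
      have h2 : y m (c m k) ∈ E m (c m k) := hy m (c m k)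
      have := (EMetric.edist_le_diam_of_mem h1 h2).trans (hE_diam m (c m k))
      exact (edist_le_ofReal (by positivity)).mp this
    have hhk : ∀ k : Fin (N^(m+1)),
        |h z (y (m+1) k) - h z (y m (c m k))| ≤ Kh * ((α ^ m)⁻¹) ^ βh := by
      intro k
      refine (h_hold z _ _).trans ?_
      exact mul_le_mul_of_nonneg_left
        (Real.rpow_le_rpow dist_nonneg (hdist k) hβh0.le) hKh.le
    have hcs : ∑ k : Fin (N^(m+1)), |ξ (m+1) k|
        ≤ Real.sqrt ((N:ℝ)^(m+1)) * Real.sqrt (∑ k, (ξ (m+1) k) ^ 2) := by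
      have := Real.sum_mul_le_sqrt_mul_sqrt Finset.univ
        (fun _ : Fin (N^(m+1)) => (1:ℝ)) (fun k => |ξ (m+1) k|)
      simpa [sq_abs, Finset.card_univ] using this
    have step1 : |S (m+1) z - S m z|
        ≤ Kh * ((α ^ m)⁻¹) ^ βh * ∑ k : Fin (N^(m+1)), |ξ (m+1) k| := by
      rw [hdiff m]
      refine (Finset.abs_sum_le_sum_abs _ _).trans ?_
      rw [Finset.mul_sum]
      refine Finset.sum_le_sum fun k _ => ?_
      rw [abs_mul]
      exact mul_le_mul_of_nonneg_right (hhk k) (abs_nonneg _)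
    have hrpow0 : (0:ℝ) ≤ ((α ^ m)⁻¹ : ℝ) ^ βh := by positivity
    have step2 : |S (m+1) z - S m z|
        ≤ Kh * (((α ^ m)⁻¹) ^ βh * (Real.sqrt ((N:ℝ)^(m+1))
            * Real.sqrt (∑ k, (ξ (m+1) k) ^ 2))) := by
      refine step1.trans ?_
      rw [mul_assoc]
      exact mul_le_mul_of_nonneg_left
        (mul_le_mul_of_nonneg_left hcs hrpow0) hKh.le
    refine step2.trans (le_of_eq ?_)
    congr 1
    -- identity: (α^m)⁻¹^βh * (√(N^(m+1)) * √s) = √(A m) * √(B m)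
    have hs0 : (0:ℝ) ≤ ∑ k, (ξ (m+1) k) ^ 2 :=
      Finset.sum_nonneg fun k _ => sq_nonneg _
    have hN0' : (0:ℝ) ≤ (N:ℝ)^(m+1) := by positivity
    have hr1 : (0:ℝ) ≤ α ^ (2 * (m : ℝ) * (β - βh)) := by positivity
    have hr2 : (0:ℝ) ≤ α ^ (-(2 * (m : ℝ) * β)) := by positivity
    rw [hA, hB]
    rw [Real.sqrt_mul hN0', Real.sqrt_mul hr2]
    have key : Real.sqrt (α ^ (2 * (m : ℝ) * (β - βh)))
        * Real.sqrt (α ^ (-(2 * (m : ℝ) * β))) = ((α ^ m)⁻¹ : ℝ) ^ βh := by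
      rw [Real.sqrt_eq_rpow, Real.sqrt_eq_rpow, ← Real.rpow_natCast α m,
        ← Real.rpow_neg_one (α ^ (m:ℝ)), ← Real.rpow_mul hα0.le,
        ← Real.rpow_mul hα0.le, ← Real.rpow_mul hα0.le, ← Real.rpow_mul hα0.le,
        ← Real.rpow_add hα0]
      congr 1
      ring
    calc ((α ^ m)⁻¹ : ℝ) ^ βh * (Real.sqrt ((N:ℝ)^(m+1))
            * Real.sqrt (∑ k, (ξ (m+1) k) ^ 2))
        = Real.sqrt ((N:ℝ)^(m+1)) * (Real.sqrt (α ^ (2 * (m : ℝ) * (β - βh)))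
            * Real.sqrt (α ^ (-(2 * (m : ℝ) * β))))
            * Real.sqrt (∑ k, (ξ (m+1) k) ^ 2) := by rw [key]; ring
      _ = _ := by ring
  -- telescoping
  have htel : S n z = S 0 z + ∑ m ∈ Finset.range n, (S (m+1) z - S m z) := by
    rw [Finset.sum_range_sub (fun m => S m z)]
    ring
  have habs : |S n z| ≤ |S 0 z| + ∑ m ∈ Finset.range n, |S (m+1) z - S m z| := by
    rw [htel]
    exact (abs_add_le _ _).trans
      (add_le_add_right (Finset.abs_sum_le_sum_abs _ _) _)
  -- Cauchy–Schwarz over m and tsum bounds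
  have hCS : ∑ m ∈ Finset.range n, Real.sqrt (A m) * Real.sqrt (B m)
      ≤ Real.sqrt (∑' m, A m) * Real.sqrt (∑' m, B m) := by
    refine (Real.sum_sqrt_mul_sqrt_le (Finset.range n)
      (fun m => hA0 m) (fun m => hB0 m)).trans ?_
    have h1 : ∑ m ∈ Finset.range n, A m ≤ ∑' m, A m :=
      Summable.sum_le_tsum _ (fun m _ => hA0 m) hsumA
    have h2 : ∑ m ∈ Finset.range n, B m ≤ ∑' m, B m :=
      Summable.sum_le_tsum _ (fun m _ => hB0 m) hsum
    exact mul_le_mul (Real.sqrt_le_sqrt h1) (Real.sqrt_le_sqrt h2)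
      (Real.sqrt_nonneg _) (Real.sqrt_nonneg _)
  have hsum_bound : ∑ m ∈ Finset.range n, |S (m+1) z - S m z|
      ≤ Kh * Real.sqrt (∑' m, A m) * Real.sqrt (∑' m, B m) := by
    calc ∑ m ∈ Finset.range n, |S (m+1) z - S m z|
        ≤ ∑ m ∈ Finset.range n, Kh * (Real.sqrt (A m) * Real.sqrt (B m)) :=
          Finset.sum_le_sum fun m _ => hDm m
      _ = Kh * ∑ m ∈ Finset.range n, Real.sqrt (A m) * Real.sqrt (B m) := by
          rw [Finset.mul_sum]
      _ ≤ Kh * (Real.sqrt (∑' m, A m) * Real.sqrt (∑' m, B m)) :=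
          mul_le_mul_of_nonneg_left hCS hKh.le
      _ = Kh * Real.sqrt (∑' m, A m) * Real.sqrt (∑' m, B m) := by ring
  calc |S n z| ≤ |S 0 z| + ∑ m ∈ Finset.range n, |S (m+1) z - S m z| := habs
    _ ≤ |h z (y 0 ⟨0, by simp⟩)| * |ξ 0 ⟨0, by simp⟩|
        + Kh * Real.sqrt (∑' m, A m) * Real.sqrt (∑' m, B m) := by
        rw [← hS0]; exact add_le_add_right hsum_bound _
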